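/- Suppose every agent satisfies ⌊μ_i/n⌋ ≥ 1. Then for any proportional outcome o, the egalitarian welfare of o is at least a 1/(2n−1) fraction of the maximum possible egalitarian welfare: min_i u_i(o) ≥ (min_i μ_i)/(2n−1). -/
import Mathlib


/-- The utility of agent `i` under outcome `o`. -/
noncomputable def util {P : Type*} {n ℓ : ℕ}
    (S : Fin n → Fin ℓ → Finset P) (i : Fin n) (o : Fin ℓ → P) : ℕ :=
  Nat.card {t : Fin ℓ // o t ∈ S i t}

/-- `μ_i`: the number of timesteps at which agent `i` approves at least one project. -/
noncomputable def mu {P : Type*} {n ℓ : ℕ}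
    (S : Fin n → Fin ℓ → Finset P) (i : Fin n) : ℕ :=
  Nat.card {t : Fin ℓ // S i t ≠ ∅}

/-- If every agent satisfies `⌊μ_i/n⌋ ≥ 1`, then any proportional outcome `o` has
egalitarian welfare at least a `1/(2n−1)` fraction of the maximum possible
egalitarian welfare: `min_i u_i(o) ≥ (min_i μ_i)/(2n−1)`. -/
theorem prop_egal_bound {P : Type*} {n ℓ : ℕ} (hn : 1 ≤ n)
    (S : Fin n → Fin ℓ → Finset P)
    (hmu : ∀ i : Fin n, 1 ≤ mu S i / n)
    (o : Fin ℓ → P)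
    (hprop : ∀ i : Fin n, mu S i / n ≤ util S i o) :
    ((Finset.univ.inf' (Finset.univ_nonempty_iff.mpr (Fin.pos_iff_nonempty.mp hn))
        (fun i => mu S i) : ℕ) : ℚ) / ((2 * n - 1 : ℕ) : ℚ) ≤
      ((Finset.univ.inf' (Finset.univ_nonempty_iff.mpr (Fin.pos_iff_nonempty.mp hn))
        (fun i => util S i o) : ℕ) : ℚ) := by
  have hne : (Finset.univ : Finset (Fin n)).Nonempty :=
    Finset.univ_nonempty_iff.mpr (Fin.pos_iff_nonempty.mp hn)
  obtain ⟨i, _, hi⟩ := Finset.exists_mem_eq_inf' hne (fun i => util S i o)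
  have hpos : (0 : ℚ) < ((2 * n - 1 : ℕ) : ℚ) := by
    have : 1 ≤ 2 * n - 1 := by omega
    exact_mod_cast Nat.lt_of_lt_of_le Nat.zero_lt_one this
  rw [hi, div_le_iff₀ hpos]
  have hle : Finset.univ.inf' hne (fun i => mu S i) ≤ mu S i :=
    Finset.inf'_le _ (Finset.mem_univ i)
  have key : mu S i ≤ util S i o * (2 * n - 1) := by
    have hq := hmu i
    have hp := hprop i
    have hdiv := Nat.div_add_mod (mu S i) n
    have hmod : mu S i % n < n := Nat.mod_lt _ (by omega)
    have h1 : mu S i ≤ (mu S i / n) * (2 * n - 1) := by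
      have hr : mu S i % n ≤ (n - 1) * (mu S i / n) :=
        le_trans (by omega) (Nat.le_mul_of_pos_right _ hq)
      calc mu S i = n * (mu S i / n) + mu S i % n := hdiv.symm
        _ ≤ n * (mu S i / n) + (n - 1) * (mu S i / n) := by omega
        _ = (mu S i / n) * (2 * n - 1) := by
            have h2 : n + (n - 1) = 2 * n - 1 := by omega
            rw [← Nat.add_mul, h2, Nat.mul_comm]
    exact le_trans h1 (Nat.mul_le_mul_right _ hp)
  calc ((Finset.univ.inf' hne (fun i => mu S i) : ℕ) : ℚ)
      ≤ ((mu S i : ℕ) : ℚ) := by exact_mod_cast hle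
    _ ≤ ((util S i o * (2 * n - 1) : ℕ) : ℚ) := by exact_mod_cast key
    _ = (util S i o : ℚ) * ((2 * n - 1 : ℕ) : ℚ) := by push_cast; ring
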